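/- Let F = GF(2), m ≥ 2s + 2 with 2 < s, g = 2, and users i ∈ [m/2] with side information A_i = {2(i-1)+1, ..., 2(i-1)+s} (mod m), s even. Consider the two transmissions x_1 = e_{s+1} and x_2 = e_3 + e_{s+1} + e_{s+2} + e_{s+3} ∈ F^m. Then: (a) every user i with s+1 ∉ A_i can decode w_{s+1} from x_1; (b) every user i with s+1 ∈ A_i (i.e., i ∈ {2, ..., s/2 + 1}) can decode exactly one message from x_2 (user 2 decodes w_{s+3}, users 3, ..., s/2+1 decode w_3); (c) no user can decode more than one message outside its side information from x_1 and x_2 combined. -/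
import Mathlib

/-- The submodule of vectors supported on a set `A`. -/
def suppSub {m : ℕ} (A : Set (ZMod m)) : Submodule (ZMod 2) (ZMod m → ZMod 2) where
  carrier := {v | ∀ c ∉ A, v c = 0}
  add_mem' := by
    intro a b ha hb c hc
    simp only [Pi.add_apply, ha c hc, hb c hc, add_zero]
  zero_mem' := by intro c hc; rfl
  smul_mem' := by
    intro r v hv c hc
    simp only [Pi.smul_apply, hv c hc, smul_zero]

lemma mem_suppSub {m : ℕ} {A : Set (ZMod m)} {v : ZMod m → ZMod 2} :
    v ∈ suppSub A ↔ ∀ c ∉ A, v c = 0 := Iff.rfl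

/-- Two-transmission private scheme for `g = 2`, `s` even, `2 < s`, `m ≥ 2s+2`:
`x₁ = e_{s+1}`, `x₂ = e_3 + e_{s+1} + e_{s+2} + e_{s+3}`.
(a) users without `s+1` decode `w_{s+1}` from `x₁`;
(b) user 2 decodes `w_{s+3}` and users `3, …, s/2+1` decode `w_3`;
(c) no user can decode more than one message outside its side information. -/
theorem stmt_13 (m s : ℕ) (hs : 2 < s) (hse : Even s) (hm : 2 * s + 2 ≤ m)
    (A : Fin (m / 2) → Set (ZMod m))
    (hA : ∀ i, A i = {j | ∃ a : ℕ, a < s ∧ j = ((2 * i.val + 1 + a : ℕ) : ZMod m)})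
    (x₁ x₂ : ZMod m → ZMod 2)
    (hx₁ : x₁ = Pi.single (((s + 1 : ℕ)) : ZMod m) 1)
    (hx₂ : x₂ = Pi.single (((3 : ℕ)) : ZMod m) 1 + Pi.single (((s + 1 : ℕ)) : ZMod m) 1
        + Pi.single (((s + 2 : ℕ)) : ZMod m) 1 + Pi.single (((s + 3 : ℕ)) : ZMod m) 1)
    (Sp : Fin (m / 2) → Submodule (ZMod 2) (ZMod m → ZMod 2))
    (hSp : ∀ i, Sp i = Submodule.span (ZMod 2)
        ({x₁, x₂} ∪ {v | ∃ j ∈ A i, v = Pi.single j (1 : ZMod 2)})) :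
    (∀ i, (((s + 1 : ℕ)) : ZMod m) ∉ A i →
      Pi.single (((s + 1 : ℕ)) : ZMod m) (1 : ZMod 2) ∈ Submodule.span (ZMod 2)
        (insert x₁ {v | ∃ j ∈ A i, v = Pi.single j (1 : ZMod 2)})) ∧
    (∀ i : Fin (m / 2), i.val = 1 →
      Pi.single (((s + 3 : ℕ)) : ZMod m) (1 : ZMod 2) ∈ Sp i) ∧
    (∀ i : Fin (m / 2), 2 ≤ i.val → i.val ≤ s / 2 →
      Pi.single (((3 : ℕ)) : ZMod m) (1 : ZMod 2) ∈ Sp i) ∧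
    (∀ i, {dd : ZMod m | dd ∉ A i ∧ Pi.single dd (1 : ZMod 2) ∈ Sp i}.Subsingleton) := by
  haveI : NeZero m := ⟨by omega⟩
  obtain ⟨t, hst⟩ := hse
  have hinj : ∀ a b : ℕ, a < m → b < m → ((a : ℕ) : ZMod m) = ((b : ℕ) : ZMod m) → a = b := by
    intro a b ha hb h
    have h' := congrArg ZMod.val h
    rwa [ZMod.val_cast_of_lt ha, ZMod.val_cast_of_lt hb] at h'
  have hAm : ∀ (i : Fin (m/2)) (j : ZMod m),
      j ∈ A i ↔ ∃ a : ℕ, a < s ∧ j = ((2 * i.val + 1 + a : ℕ) : ZMod m) := by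
    intro i j
    rw [hA i]
    exact Iff.rfl
  have castEq : ∀ a b : ℕ, a = b → ((a : ℕ) : ZMod m) = ((b : ℕ) : ZMod m) := by
    intro a b h; rw [h]
  -- distinctness of the four key indices
  have n31 : ((3:ℕ) : ZMod m) ≠ ((s+1:ℕ) : ZMod m) := fun h => by
    have := hinj _ _ (by omega) (by omega) h; omega
  have n32 : ((3:ℕ) : ZMod m) ≠ ((s+2:ℕ) : ZMod m) := fun h => by
    have := hinj _ _ (by omega) (by omega) h; omega
  have n34 : ((3:ℕ) : ZMod m) ≠ ((s+3:ℕ) : ZMod m) := fun h => by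
    have := hinj _ _ (by omega) (by omega) h; omega
  have n12 : ((s+1:ℕ) : ZMod m) ≠ ((s+2:ℕ) : ZMod m) := fun h => by
    have := hinj _ _ (by omega) (by omega) h; omega
  have n14 : ((s+1:ℕ) : ZMod m) ≠ ((s+3:ℕ) : ZMod m) := fun h => by
    have := hinj _ _ (by omega) (by omega) h; omega
  have n24 : ((s+2:ℕ) : ZMod m) ≠ ((s+3:ℕ) : ZMod m) := fun h => by
    have := hinj _ _ (by omega) (by omega) h; omega
  refine ⟨?_, ?_, ?_, ?_⟩
  · -- part (a)
    intro i _
    rw [← hx₁]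
    exact Submodule.subset_span (Set.mem_insert _ _)
  · -- part (b)
    intro i hi
    rw [hSp i]
    have m3 : ((3:ℕ) : ZMod m) ∈ A i := (hAm i _).2 ⟨0, by omega, castEq _ _ (by omega)⟩
    have m1 : ((s+1:ℕ) : ZMod m) ∈ A i := (hAm i _).2 ⟨s-2, by omega, castEq _ _ (by omega)⟩
    have m2 : ((s+2:ℕ) : ZMod m) ∈ A i := (hAm i _).2 ⟨s-1, by omega, castEq _ _ (by omega)⟩
    have key : Pi.single (((s+3:ℕ)) : ZMod m) (1 : ZMod 2)
        = x₂ - Pi.single (((3:ℕ)) : ZMod m) 1 - Pi.single (((s+1:ℕ)) : ZMod m) 1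
          - Pi.single (((s+2:ℕ)) : ZMod m) 1 := by
      rw [hx₂]; abel
    rw [key]
    refine sub_mem (sub_mem (sub_mem ?_ ?_) ?_) ?_
    · exact Submodule.subset_span (Set.mem_union_left _ (by simp))
    · exact Submodule.subset_span (Set.mem_union_right _ ⟨_, m3, rfl⟩)
    · exact Submodule.subset_span (Set.mem_union_right _ ⟨_, m1, rfl⟩)
    · exact Submodule.subset_span (Set.mem_union_right _ ⟨_, m2, rfl⟩)
  · -- part (c)
    intro i hi2 his
    rw [hSp i]
    have hiv : 2 * i.val ≤ s := by omega
    have m1 : ((s+1:ℕ) : ZMod m) ∈ A i :=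
      (hAm i _).2 ⟨s - 2*i.val, by omega, castEq _ _ (by omega)⟩
    have m2 : ((s+2:ℕ) : ZMod m) ∈ A i :=
      (hAm i _).2 ⟨s + 1 - 2*i.val, by omega, castEq _ _ (by omega)⟩
    have m4 : ((s+3:ℕ) : ZMod m) ∈ A i :=
      (hAm i _).2 ⟨s + 2 - 2*i.val, by omega, castEq _ _ (by omega)⟩
    have key : Pi.single (((3:ℕ)) : ZMod m) (1 : ZMod 2)
        = x₂ - Pi.single (((s+1:ℕ)) : ZMod m) 1 - Pi.single (((s+2:ℕ)) : ZMod m) 1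
          - Pi.single (((s+3:ℕ)) : ZMod m) 1 := by
      rw [hx₂]; abel
    rw [key]
    refine sub_mem (sub_mem (sub_mem ?_ ?_) ?_) ?_
    · exact Submodule.subset_span (Set.mem_union_left _ (by simp))
    · exact Submodule.subset_span (Set.mem_union_right _ ⟨_, m1, rfl⟩)
    · exact Submodule.subset_span (Set.mem_union_right _ ⟨_, m2, rfl⟩)
    · exact Submodule.subset_span (Set.mem_union_right _ ⟨_, m4, rfl⟩)
  · -- part (d)
    intro i
    -- interval lemmas
    have L1 : ((s+2:ℕ) : ZMod m) ∈ A i → ((s+1:ℕ) : ZMod m) ∉ A i → False := by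
      intro h2' h1'
      obtain ⟨a, ha, hEq⟩ := (hAm i _).1 h2'
      by_cases h0 : a = 0
      · have := hinj (s+2) (2*i.val+1+a) (by omega) (by omega) hEq
        omega
      · refine h1' ((hAm i _).2 ⟨a-1, by omega, ?_⟩)
        have key : ((s+1:ℕ) : ZMod m) + 1 = ((2*i.val+1+(a-1) : ℕ) : ZMod m) + 1 := by
          push_cast [Nat.cast_sub (show 1 ≤ a by omega)] at hEq ⊢
          linear_combination hEq
        exact add_right_cancel key
    have L2 : ((3:ℕ) : ZMod m) ∈ A i → ((s+2:ℕ) : ZMod m) ∈ A i →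
        ((s+1:ℕ) : ZMod m) ∈ A i := by
      intro h3 h2'
      obtain ⟨a, ha, hEq3⟩ := (hAm i _).1 h3
      obtain ⟨a', ha', hEq2⟩ := (hAm i _).1 h2'
      have key : ((a + (s-1) : ℕ) : ZMod m) = ((a' : ℕ) : ZMod m) := by
        push_cast [Nat.cast_sub (show 1 ≤ s by omega)] at hEq3 hEq2 ⊢
        linear_combination hEq2 - hEq3
      have hnat : a + (s-1) = a' := hinj _ _ (by omega) (by omega) key
      have ha0 : a = 0 := by omega
      have h31 : (3:ℕ) = 2*i.val+1 :=
        hinj _ _ (by omega) (by omega) (by simpa [ha0] using hEq3)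
      exact (hAm i _).2 ⟨s-2, by omega, castEq _ _ (by omega)⟩
    have L3 : ((3:ℕ) : ZMod m) ∈ A i → ((s+3:ℕ) : ZMod m) ∈ A i → False := by
      intro h3 h4'
      obtain ⟨a, ha, hEq3⟩ := (hAm i _).1 h3
      obtain ⟨a', ha', hEq4⟩ := (hAm i _).1 h4'
      have key : ((a + s : ℕ) : ZMod m) = ((a' : ℕ) : ZMod m) := by
        push_cast at hEq3 hEq4 ⊢
        linear_combination hEq4 - hEq3
      have hnat : a + s = a' := hinj _ _ (by omega) (by omega) key
      omega
    -- characterization of decodable indices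
    have char : ∀ dd : ZMod m, dd ∉ A i → Pi.single dd (1 : ZMod 2) ∈ Sp i →
        dd = ((s+1:ℕ) : ZMod m) ∨
        (dd = ((3:ℕ) : ZMod m) ∧ ((s+2:ℕ) : ZMod m) ∈ A i ∧ ((s+3:ℕ) : ZMod m) ∈ A i) ∨
        (dd = ((s+3:ℕ) : ZMod m) ∧ ((3:ℕ) : ZMod m) ∈ A i ∧ ((s+2:ℕ) : ZMod m) ∈ A i) := by
      intro dd hnot hmem
      rw [hSp i] at hmem
      have hset : ({x₁, x₂} : Set (ZMod m → ZMod 2))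
          ∪ {v | ∃ j ∈ A i, v = Pi.single j (1 : ZMod 2)}
          = insert x₁ (insert x₂ {v | ∃ j ∈ A i, v = Pi.single j (1 : ZMod 2)}) := by
        rw [Set.insert_union, Set.singleton_union]
      rw [hset, Submodule.mem_span_insert] at hmem
      obtain ⟨c₁, z₁, hz₁, hdd⟩ := hmem
      rw [Submodule.mem_span_insert] at hz₁
      obtain ⟨c₂, z, hzspan, rfl⟩ := hz₁
      have hz0 : ∀ c, c ∉ A i → z c = 0 := by
        have hle : Submodule.span (ZMod 2) {v | ∃ j ∈ A i, v = Pi.single j (1 : ZMod 2)}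
            ≤ suppSub (A i) := by
          rw [Submodule.span_le]
          rintro v ⟨j, hj, rfl⟩
          rw [SetLike.mem_coe, mem_suppSub]
          intro c' hc'
          exact Pi.single_eq_of_ne (fun h => hc' (by rw [h]; exact hj)) 1
        exact (mem_suppSub.1 (hle hzspan))
      have hEv : ∀ c, c ∉ A i →
          (if c = dd then (1:ZMod 2) else 0) =
          c₁ * (if c = ((s+1:ℕ) : ZMod m) then 1 else 0) +
          c₂ * ((if c = ((3:ℕ) : ZMod m) then 1 else 0)
            + (if c = ((s+1:ℕ) : ZMod m) then 1 else 0)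
            + (if c = ((s+2:ℕ) : ZMod m) then 1 else 0)
            + (if c = ((s+3:ℕ) : ZMod m) then 1 else 0)) := by
        intro c hc
        have h := congrFun hdd c
        rw [hx₁, hx₂] at h
        simp only [Pi.add_apply, Pi.smul_apply, smul_eq_mul, Pi.single_apply,
          hz0 c hc, add_zero] at h
        linear_combination h
      have two : ∀ a : ZMod 2, a = 0 ∨ a = 1 := by decide
      rcases two c₁ with rfl | rfl <;> rcases two c₂ with rfl | rfl
      · -- c₁ = 0, c₂ = 0
        have h := hEv dd hnot
        rw [if_pos rfl] at h
        simp only [zero_mul, add_zero, zero_add] at h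
        exact absurd h (by decide)
      · -- c₁ = 0, c₂ = 1
        have mem3 : dd ≠ ((3:ℕ) : ZMod m) → ((3:ℕ) : ZMod m) ∈ A i := by
          intro hne'
          by_contra hc
          have h := hEv _ hc
          rw [if_neg (Ne.symm hne'), if_pos rfl, if_neg n31, if_neg n32, if_neg n34] at h
          exact absurd h (by decide)
        have mem2 : dd ≠ ((s+2:ℕ) : ZMod m) → ((s+2:ℕ) : ZMod m) ∈ A i := by
          intro hne'
          by_contra hc
          have h := hEv _ hc
          rw [if_neg (Ne.symm hne'), if_pos rfl, if_neg (Ne.symm n32),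
            if_neg (Ne.symm n12), if_neg n24] at h
          exact absurd h (by decide)
        have mem4 : dd ≠ ((s+3:ℕ) : ZMod m) → ((s+3:ℕ) : ZMod m) ∈ A i := by
          intro hne'
          by_contra hc
          have h := hEv _ hc
          rw [if_neg (Ne.symm hne'), if_pos rfl, if_neg (Ne.symm n34),
            if_neg (Ne.symm n14), if_neg (Ne.symm n24)] at h
          exact absurd h (by decide)
        have hd : dd = ((3:ℕ) : ZMod m) ∨ dd = ((s+1:ℕ) : ZMod m) ∨
            dd = ((s+2:ℕ) : ZMod m) ∨ dd = ((s+3:ℕ) : ZMod m) := by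
          by_contra hcon
          push_neg at hcon
          obtain ⟨e3, e1, e2, e4⟩ := hcon
          have h := hEv dd hnot
          rw [if_pos rfl, if_neg e3, if_neg e1, if_neg e2, if_neg e4] at h
          exact absurd h (by decide)
        rcases hd with hd | hd | hd | hd
        · exact Or.inr (Or.inl ⟨hd, mem2 (by rw [hd]; exact n32),
            mem4 (by rw [hd]; exact n34)⟩)
        · exact absurd (L2 (mem3 (by rw [hd]; exact Ne.symm n31))
            (mem2 (by rw [hd]; exact n12))) (by rw [← hd]; exact hnot)
        · exact absurd (L3 (mem3 (by rw [hd]; exact Ne.symm n32))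
            (mem4 (by rw [hd]; exact n24))) not_false
        · exact Or.inr (Or.inr ⟨hd, mem3 (by rw [hd]; exact Ne.symm n34),
            mem2 (by rw [hd]; exact Ne.symm n24)⟩)
      · -- c₁ = 1, c₂ = 0
        have h := hEv dd hnot
        by_cases hd : dd = ((s+1:ℕ) : ZMod m)
        · exact Or.inl hd
        · rw [if_pos rfl, if_neg hd] at h
          simp only [zero_mul, add_zero, mul_zero] at h
          exact absurd h (by decide)
      · -- c₁ = 1, c₂ = 1
        have mem3 : dd ≠ ((3:ℕ) : ZMod m) → ((3:ℕ) : ZMod m) ∈ A i := by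
          intro hne'
          by_contra hc
          have h := hEv _ hc
          rw [if_neg (Ne.symm hne'), if_pos rfl, if_neg n31, if_neg n32, if_neg n34] at h
          exact absurd h (by decide)
        have mem2 : dd ≠ ((s+2:ℕ) : ZMod m) → ((s+2:ℕ) : ZMod m) ∈ A i := by
          intro hne'
          by_contra hc
          have h := hEv _ hc
          rw [if_neg (Ne.symm hne'), if_pos rfl, if_neg (Ne.symm n32),
            if_neg (Ne.symm n12), if_neg n24] at h
          exact absurd h (by decide)
        have mem4 : dd ≠ ((s+3:ℕ) : ZMod m) → ((s+3:ℕ) : ZMod m) ∈ A i := by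
          intro hne'
          by_contra hc
          have h := hEv _ hc
          rw [if_neg (Ne.symm hne'), if_pos rfl, if_neg (Ne.symm n34),
            if_neg (Ne.symm n14), if_neg (Ne.symm n24)] at h
          exact absurd h (by decide)
        have hd : dd = ((3:ℕ) : ZMod m) ∨ dd = ((s+2:ℕ) : ZMod m) ∨
            dd = ((s+3:ℕ) : ZMod m) := by
          by_contra hcon
          push_neg at hcon
          obtain ⟨e3, e2, e4⟩ := hcon
          have h := hEv dd hnot
          by_cases e1 : dd = ((s+1:ℕ) : ZMod m)
          · rw [if_pos rfl, e1, if_pos rfl, if_neg (Ne.symm n31), if_neg n12, if_neg n14] at h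
            exact absurd h (by decide)
          · rw [if_pos rfl, if_neg e3, if_neg e1, if_neg e2, if_neg e4] at h
            exact absurd h (by decide)
        rcases hd with hd | hd | hd
        · exact Or.inr (Or.inl ⟨hd, mem2 (by rw [hd]; exact n32),
            mem4 (by rw [hd]; exact n34)⟩)
        · exact absurd (L3 (mem3 (by rw [hd]; exact Ne.symm n32))
            (mem4 (by rw [hd]; exact n24))) not_false
        · exact Or.inr (Or.inr ⟨hd, mem3 (by rw [hd]; exact Ne.symm n34),
            mem2 (by rw [hd]; exact Ne.symm n24)⟩)
    -- combine
    intro a ha b hb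
    obtain ⟨ha1, ha2⟩ := ha
    obtain ⟨hb1, hb2⟩ := hb
    rcases char a ha1 ha2 with hA1 | ⟨hA1, p2, p4⟩ | ⟨hA1, q3, q2⟩ <;>
      rcases char b hb1 hb2 with hB1 | ⟨hB1, r2, r4⟩ | ⟨hB1, u3, u2⟩
    · rw [hA1, hB1]
    · exact absurd (L1 r2 (by rw [← hA1]; exact ha1)) not_false
    · exact absurd (L2 u3 u2) (by rw [← hA1]; exact ha1)
    · exact absurd (L1 p2 (by rw [← hB1]; exact hb1)) not_false
    · rw [hA1, hB1]
    · exact absurd p4 (by rw [← hB1]; exact hb1)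
    · exact absurd (L2 q3 q2) (by rw [← hB1]; exact hb1)
    · exact absurd r4 (by rw [← hA1]; exact ha1)
    · rw [hA1, hB1]
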